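/- Let K be a field of characteristic zero, let n ≥ 1, and let L = FreeLieAlgebra K (Option (Fin n)) with canonical embedding ι; write δ = ι none. For each permutation σ of Fin n, let c_σ be the left-normed bracket ⁅⋯⁅⁅δ, ι(some (σ 0))⁆, ι(some (σ 1))⁆, ⋯, ι(some (σ (n-1)))⁆. Then the family (c_σ), indexed by the n! permutations σ of Fin n, is linearly independent over K. -/

import Mathlib

attribute [local instance] LieRing.ofAssociativeRing

noncomputable def embedFL (K : Type*) [Field K] (n : ℕ) :
    FreeLieAlgebra K (Option (Fin n)) →ₗ⁅K⁆ MonoidAlgebra K (FreeMonoid (Option (Fin n))) :=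
  FreeLieAlgebra.lift K fun x => MonoidAlgebra.single (FreeMonoid.of x) 1

open Classical in
lemma coeff_foldl (K : Type*) [Field K] (n : ℕ) (l : List (Fin n)) :
    ∀ m : List (Fin n),
    (embedFL K n (l.foldl (fun x i => ⁅x, FreeLieAlgebra.of K (some i)⁆)
        (FreeLieAlgebra.of K (none : Option (Fin n))))).coeff
      (FreeMonoid.ofList (m.map some ++ [none]))
    = if m = l.reverse then (-1 : K) ^ l.length else 0 := by
  induction l using List.reverseRecOn with
  | nil =>
      intro m
      simp only [List.foldl_nil, embedFL, FreeLieAlgebra.lift_of_apply]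
      rcases m with _ | ⟨b, m'⟩
      · simp [MonoidAlgebra.single_apply]
      · rw [MonoidAlgebra.single_apply, if_neg, if_neg]
        · simp
        · intro h
          have : ([none] : List (Option (Fin n))) = some b :: (m'.map some ++ [none]) :=
            congrArg FreeMonoid.toList h
          simp at this
  | append_singleton l a ih =>
      intro m
      rw [List.foldl_append, List.foldl_cons, List.foldl_nil]
      set y := l.foldl (fun x i => ⁅x, FreeLieAlgebra.of K (some i)⁆)
        (FreeLieAlgebra.of K (none : Option (Fin n))) with hy
      rw [LieHom.map_lie, Ring.lie_def]
      have hof : embedFL K n (FreeLieAlgebra.of K (some a : Option (Fin n)))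
          = MonoidAlgebra.single (FreeMonoid.of (some a)) 1 :=
        FreeLieAlgebra.lift_of_apply _ _
      rw [hof, MonoidAlgebra.coeff_sub, Finsupp.sub_apply]
      have h1 := MonoidAlgebra.mul_single_apply_of_not_exists_mul (R := K)
        (1 : K) (g := FreeMonoid.of (some a : Option (Fin n)))
        (g' := FreeMonoid.ofList (m.map some ++ [none])) (embedFL K n y)
        (by
          rintro ⟨d, hd⟩
          have : m.map some ++ [none] = FreeMonoid.toList d ++ [some a] :=
            congrArg FreeMonoid.toList hd
          have := congrArg List.getLast? this
          simp at this)
      rw [h1]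
      rcases m with _ | ⟨b, m'⟩
      · have h2 := MonoidAlgebra.single_mul_apply_of_not_exists_mul (R := K)
          (1 : K) (g := FreeMonoid.of (some a : Option (Fin n)))
          (g' := FreeMonoid.ofList (([] : List (Fin n)).map some ++ [none])) (embedFL K n y)
          (by
            rintro ⟨d, hd⟩
            have : ([none] : List (Option (Fin n))) = some a :: FreeMonoid.toList d :=
              congrArg FreeMonoid.toList hd
            simp at this)
        rw [h2, if_neg]
        · simp
        · simp
      · by_cases hba : b = a
        · subst hba
          have H : ∀ d : FreeMonoid (Option (Fin n)),
              FreeMonoid.of (some b : Option (Fin n)) * d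
                = FreeMonoid.ofList ((b :: m').map some ++ [none])
              ↔ d = FreeMonoid.ofList (m'.map some ++ [none]) := by
            intro d
            constructor
            · intro h
              have : some b :: FreeMonoid.toList d = some b :: (m'.map some ++ [none]) :=
                congrArg FreeMonoid.toList h
              simp only [List.cons.injEq, true_and] at this
              exact FreeMonoid.toList.injective this
            · rintro rfl
              rfl
          have h2 := MonoidAlgebra.single_mul_apply_aux (x := embedFL K n y) (r := (1 : K)) _ (fun d _ => H d)
          rw [h2, one_mul, ih m']
          by_cases hm : m' = l.reverse
          · subst hm
            rw [if_pos rfl, if_pos (by simp), List.length_append]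
            simp [pow_succ]
          · rw [if_neg hm, if_neg (by simp [hm])]
            simp
        · have h2 := MonoidAlgebra.single_mul_apply_of_not_exists_mul (R := K)
            (1 : K) (g := FreeMonoid.of (some a : Option (Fin n)))
            (g' := FreeMonoid.ofList ((b :: m').map some ++ [none])) (embedFL K n y)
            (by
              rintro ⟨d, hd⟩
              have : some b :: (m'.map some ++ [none]) = some a :: FreeMonoid.toList d :=
                congrArg FreeMonoid.toList hd
              simp [hba] at this)
          rw [h2, if_neg]
          · simp
          · simp [hba]

/-- In `L = FreeLieAlgebra K (Option (Fin n))` with `n ≥ 1` and `δ = ι none`, the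
left-normed brackets `c_σ = ⁅⋯⁅⁅δ, ι(some (σ 0))⁆, ι(some (σ 1))⁆, ⋯, ι(some (σ (n-1)))⁆`,
indexed by the permutations `σ` of `Fin n`, are linearly independent over `K`. -/
theorem leftNormed_derived_brackets_linearIndependent (K : Type*) [Field K] [CharZero K]
    (n : ℕ) (hn : 1 ≤ n)
    (c : Equiv.Perm (Fin n) → FreeLieAlgebra K (Option (Fin n)))
    (hc : ∀ σ : Equiv.Perm (Fin n),
      c σ = (List.finRange n).foldl
        (fun x i => ⁅x, FreeLieAlgebra.of K (some (σ i))⁆)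
        (FreeLieAlgebra.of K (none : Option (Fin n)))) :
    LinearIndependent K c := by
  classical
  set w : Equiv.Perm (Fin n) → FreeMonoid (Option (Fin n)) := fun σ =>
    FreeMonoid.ofList ((((List.finRange n).map σ).reverse).map some ++ [none]) with hw
  let T : MonoidAlgebra K (FreeMonoid (Option (Fin n))) →ₗ[K] (Equiv.Perm (Fin n) → K) :=
    LinearMap.pi fun σ => ((-1 : K) ^ n) • (Finsupp.lapply (w σ) ∘ₗ (MonoidAlgebra.coeffLinearEquiv K).toLinearMap)
  have key : ∀ σ, (T ∘ₗ (embedFL K n).toLinearMap) (c σ) = Pi.single σ (1 : K) := by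
    intro σ
    funext τ
    have hfold : c σ = ((List.finRange n).map σ).foldl
        (fun x i => ⁅x, FreeLieAlgebra.of K (some i)⁆)
        (FreeLieAlgebra.of K (none : Option (Fin n))) := by
      rw [hc σ, List.foldl_map]
    have hcoeff := coeff_foldl K n ((List.finRange n).map σ)
      (((List.finRange n).map τ).reverse)
    have hiff : ((List.finRange n).map τ).reverse = ((List.finRange n).map σ).reverse ↔ τ = σ := by
      rw [List.reverse_inj, ← List.ofFn_eq_map, ← List.ofFn_eq_map, List.ofFn_inj]
      exact ⟨fun h => Equiv.ext (congrFun h), fun h => by rw [h]⟩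
    have : (T ∘ₗ (embedFL K n).toLinearMap) (c σ) τ
        = ((-1 : K) ^ n) * (embedFL K n (c σ)).coeff (w τ) := rfl
    rw [this, hfold, hw]
    simp only
    rw [hcoeff]
    by_cases h : τ = σ
    · rw [if_pos (hiff.mpr h), List.length_map, List.length_finRange, Pi.single_apply, if_pos h]
      rw [← pow_add]
      simp [pow_mul, Even.neg_one_pow ⟨n, rfl⟩]
    · rw [if_neg (fun hh => h (hiff.mp hh)), Pi.single_apply, if_neg h, mul_zero]
  have hind : LinearIndependent K ((T ∘ₗ (embedFL K n).toLinearMap) ∘ c) := by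
    have he : ((T ∘ₗ (embedFL K n).toLinearMap) ∘ c)
        = fun σ => Pi.single σ (1 : K) := funext key
    rw [he]
    have hb := (Pi.basisFun K (Equiv.Perm (Fin n))).linearIndependent
    have : ⇑(Pi.basisFun K (Equiv.Perm (Fin n))) = fun σ => Pi.single σ (1 : K) :=
      funext fun σ => Pi.basisFun_apply K _ σ
    rwa [this] at hb
  exact hind.of_comp _
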